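/- Let p be a prime, D a subspace of F_{p^2}^n, and M a basis of D ∩ D^{⊥h}, where ⊥h denotes the Hermitian dual. Then there exists a set B of vectors in D that is orthonormal with respect to the Hermitian inner product (⟨b,b'⟩ = 0 for distinct b, b' ∈ B and ‖b‖ = 1 for all b ∈ B) such that M ∪ B is a basis for D. -/

import Mathlib

set_option linter.unusedSectionVars false
set_option maxHeartbeats 1000000

/-- The Hermitian dual of a subspace of `F_{p^2}^n`, with respect to
`⟨x,y⟩ = ∑ i, x i * (y i)^p`. -/
def hermDual (p : ℕ) {n : ℕ} {F : Type*} [Field F] (D : Submodule F (Fin n → F)) :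
    Submodule F (Fin n → F) where
  carrier := {v | ∀ d ∈ D, ∑ i, v i * (d i) ^ p = 0}
  zero_mem' := by intro d _; simp
  add_mem' := by
    intro a b ha hb d hd
    simp only [Pi.add_apply, add_mul, Finset.sum_add_distrib, ha d hd, hb d hd, add_zero]
  smul_mem' := by
    intro c a ha d hd
    simp only [Pi.smul_apply, smul_eq_mul, mul_assoc, ← Finset.mul_sum, ha d hd, mul_zero]

open Finset Polynomial

section aux
variable {p : ℕ} {n : ℕ} {F : Type*} [Field F]

private def Bf (p : ℕ) {n : ℕ} {F : Type*} [Field F] (x y : Fin n → F) : F :=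
  ∑ i, x i * (y i) ^ p

private lemma Bf_add_left (x x' y : Fin n → F) : Bf p (x + x') y = Bf p x y + Bf p x' y := by
  simp [Bf, add_mul, Finset.sum_add_distrib]

private lemma Bf_smul_left (c : F) (x y : Fin n → F) : Bf p (c • x) y = c * Bf p x y := by
  simp [Bf, mul_assoc, Finset.mul_sum]

private lemma Bf_sub_left (x x' y : Fin n → F) : Bf p (x - x') y = Bf p x y - Bf p x' y := by
  simp [Bf, sub_mul, Finset.sum_sub_distrib]

/-- the linear map `x ↦ Bf p x y` -/
private def BfL (p : ℕ) {n : ℕ} {F : Type*} [Field F] (y : Fin n → F) : (Fin n → F) →ₗ[F] F where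
  toFun x := Bf p x y
  map_add' x x' := Bf_add_left x x' y
  map_smul' c x := Bf_smul_left c x y

private lemma mem_hermDual {D : Submodule F (Fin n → F)} {v : Fin n → F} :
    v ∈ hermDual p D ↔ ∀ d ∈ D, Bf p v d = 0 := Iff.rfl

variable [Fintype F]

private lemma charP_of_card (hp : p.Prime) (hF : Fintype.card F = p ^ 2) : CharP F p := by
  set q := ringChar F with hq
  haveI : CharP F q := ringChar.charP F
  have hqp : q.Prime := CharP.char_is_prime F q
  obtain ⟨m, _, hcard⟩ := FiniteField.card F q
  have hdvd : q ∣ p ^ 2 := by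
    rw [← hF, hcard]
    exact dvd_pow_self q (by positivity)
  have heq : q = p :=
    (Nat.prime_dvd_prime_iff_eq hqp hp).mp (Nat.Prime.dvd_of_dvd_pow hqp hdvd)
  rw [← heq]
  exact ringChar.charP F

private lemma frob_sq (a : F) (hF : Fintype.card F = p ^ 2) : (a ^ p) ^ p = a := by
  rw [← pow_mul, ← pow_two, ← hF, FiniteField.pow_card]

private lemma Bf_conj [CharP F p] [Fact p.Prime] (hF : Fintype.card F = p ^ 2)
    (x y : Fin n → F) : Bf p y x = (Bf p x y) ^ p := by
  unfold Bf
  rw [← frobenius_def, map_sum]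
  simp only [frobenius_def, mul_pow, frob_sq _ hF]
  exact Finset.sum_congr rfl fun i _ => mul_comm _ _

private lemma Bf_sub_right [CharP F p] [Fact p.Prime] (x y z : Fin n → F) :
    Bf p x (y - z) = Bf p x y - Bf p x z := by
  simp only [Bf, Pi.sub_apply, sub_pow_char, mul_sub, Finset.sum_sub_distrib]

private lemma Bf_add_right [CharP F p] [Fact p.Prime] (x y z : Fin n → F) :
    Bf p x (y + z) = Bf p x y + Bf p x z := by
  simp only [Bf, Pi.add_apply, add_pow_char, mul_add, Finset.sum_add_distrib]

private lemma Bf_smul_right [CharP F p] [Fact p.Prime] (c : F) (x y : Fin n → F) :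
    Bf p x (c • y) = c ^ p * Bf p x y := by
  simp only [Bf, Pi.smul_apply, smul_eq_mul, mul_pow, Finset.mul_sum]
  exact Finset.sum_congr rfl fun i _ => by ring

private lemma exists_frob_ne (hp : p.Prime) (hF : Fintype.card F = p ^ 2) :
    ∃ c : F, c ^ p ≠ c := by
  by_contra h
  push_neg at h
  have hdeg : (X ^ p - X : F[X]).natDegree = p := by
    rw [Polynomial.natDegree_sub_eq_left_of_natDegree_lt] <;>
      simp [Polynomial.natDegree_X_pow, hp.one_lt]
  have hf : (X ^ p - X : F[X]) = 0 := by
    apply Polynomial.eq_zero_of_natDegree_lt_card_of_eval_eq_zero' _ Finset.univ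
    · intro i _
      simp [h i]
    · rw [hdeg, Finset.card_univ, hF]
      calc p = p ^ 1 := (pow_one p).symm
        _ < p ^ 2 := Nat.pow_lt_pow_right hp.one_lt one_lt_two
  rw [hf] at hdeg
  simp only [Polynomial.natDegree_zero] at hdeg
  exact hp.pos.ne hdeg

private lemma exists_pow_eq [DecidableEq F] (hp : p.Prime) (hF : Fintype.card F = p ^ 2)
    {a : F} (ha : a ≠ 0) (hfix : a ^ p = a) : ∃ c : F, c ^ (p + 1) = a := by
  have hps : p - 1 + 1 = p := Nat.succ_pred_eq_of_pos hp.pos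
  have h1 : a ^ (p - 1) = 1 := by
    have h2 : a ^ (p - 1) * a = 1 * a := by
      rw [← pow_succ, hps, hfix, one_mul]
    exact mul_right_cancel₀ ha h2
  obtain ⟨g, hg⟩ := IsCyclic.exists_generator (α := Fˣ)
  set au : Fˣ := Units.mk0 a ha with hau
  obtain ⟨k, hk⟩ := ((isOfFinOrder_of_finite g).mem_powers_iff_mem_zpowers).mpr (hg au)
  have hk' : g ^ k = au := hk
  have horder : orderOf g = p ^ 2 - 1 := by
    rw [orderOf_eq_card_of_forall_mem_zpowers hg, Nat.card_eq_fintype_card,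
      Fintype.card_units, hF]
  have haun : au ^ (p - 1) = 1 := by
    ext
    push_cast [hau]
    exact h1
  have hgk : g ^ (k * (p - 1)) = 1 := by rw [pow_mul, hk', haun]
  have hdvd : (p + 1) * (p - 1) ∣ k * (p - 1) := by
    rw [← Nat.sq_sub_sq, one_pow, ← horder]
    exact orderOf_dvd_of_pow_eq_one hgk
  have hdvd2 : (p + 1) ∣ k :=
    (Nat.mul_dvd_mul_iff_right (Nat.sub_pos_of_lt hp.one_lt)).mp hdvd
  obtain ⟨m, hm⟩ := hdvd2
  refine ⟨((g ^ m : Fˣ) : F), ?_⟩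
  have hmm : (g ^ m) ^ (p + 1) = au := by rw [← pow_mul, mul_comm, ← hm, hk']
  calc ((g ^ m : Fˣ) : F) ^ (p + 1) = (((g ^ m) ^ (p + 1) : Fˣ) : F) := by push_cast; ring
    _ = a := by rw [hmm]; rfl

private lemma exists_nonisotropic [CharP F p] [Fact p.Prime] (hp : p.Prime)
    (hF : Fintype.card F = p ^ 2) (D : Submodule F (Fin n → F))
    (hne : ¬ D ≤ hermDual p D) : ∃ x ∈ D, Bf p x x ≠ 0 := by
  by_contra h
  push_neg at h
  apply hne
  intro x hx
  rw [mem_hermDual]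
  intro d hd
  obtain ⟨c0, hc0⟩ := exists_frob_ne hp hF
  set t := Bf p x d with ht
  have key : ∀ c : F, c ^ p * t + c * t ^ p = 0 := by
    intro c
    have hmem : x + c • d ∈ D := D.add_mem hx (D.smul_mem c hd)
    have h0 := h _ hmem
    have hexp : Bf p (x + c • d) (x + c • d) =
        Bf p x x + c ^ p * Bf p x d + c * Bf p d x + c * (c ^ p * Bf p d d) := by
      simp only [Bf_add_left, Bf_add_right, Bf_smul_left, Bf_smul_right]
      ring
    rw [hexp, h x hx, h d hd, Bf_conj hF x d, ← ht] at h0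
    linear_combination h0
  have h1 : t ^ p = -t := by
    have hk := key 1
    rw [one_pow, one_mul, one_mul] at hk
    linear_combination hk
  have h2 := key c0
  rw [h1] at h2
  have h3 : t * (c0 ^ p - c0) = 0 := by linear_combination h2
  rcases mul_eq_zero.mp h3 with h4 | h4
  · exact h4
  · exact absurd (sub_eq_zero.mp h4) hc0

end aux

/-- If `M` is a basis of `D ∩ D^{⊥h}`, there is a Hermitian-orthonormal
set `B ⊆ D` such that `M ∪ B` is a basis of `D`. -/
theorem exists_orthonormal_completion (p n : ℕ) (hp : p.Prime) (F : Type*) [Field F] [Fintype F] [DecidableEq F]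
    (hF : Fintype.card F = p ^ 2)
    (D : Submodule F (Fin n → F)) (M : Finset (Fin n → F))
    (hMli : LinearIndependent F (Subtype.val : ↥(M : Set (Fin n → F)) → (Fin n → F)))
    (hMspan : Submodule.span F (M : Set (Fin n → F)) = D ⊓ hermDual p D) :
    ∃ B : Finset (Fin n → F),
      (↑B : Set (Fin n → F)) ⊆ D ∧
      (∀ b ∈ B, ∀ b' ∈ B, b ≠ b' → ∑ i, b i * (b' i) ^ p = 0) ∧
      (∀ b ∈ B, ∑ i, (b i) ^ (p + 1) = 1) ∧
      LinearIndependent F (Subtype.val : ↥((M ∪ B : Finset (Fin n → F)) : Set (Fin n → F)) → (Fin n → F)) ∧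
      Submodule.span F ((M ∪ B : Finset (Fin n → F)) : Set (Fin n → F)) = D := by
  haveI : Fact p.Prime := ⟨hp⟩
  haveI : CharP F p := charP_of_card hp hF
  suffices H : ∀ k (D : Submodule F (Fin n → F)), Module.finrank F D ≤ k →
      ∀ M : Finset (Fin n → F),
      LinearIndependent F (Subtype.val : ↥(M : Set (Fin n → F)) → (Fin n → F)) →
      Submodule.span F (M : Set (Fin n → F)) = D ⊓ hermDual p D →
      (∃ B : Finset (Fin n → F),
        (↑B : Set (Fin n → F)) ⊆ D ∧
        (∀ b ∈ B, ∀ b' ∈ B, b ≠ b' → ∑ i, b i * (b' i) ^ p = 0) ∧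
        (∀ b ∈ B, ∑ i, (b i) ^ (p + 1) = 1) ∧
        LinearIndependent F (Subtype.val : ↥((M ∪ B : Finset (Fin n → F)) : Set (Fin n → F)) → (Fin n → F)) ∧
        Submodule.span F ((M ∪ B : Finset (Fin n → F)) : Set (Fin n → F)) = D) by
    exact H (Module.finrank F D) D le_rfl M hMli hMspan
  -- a helper for the degenerate (base) case
  have base : ∀ (D : Submodule F (Fin n → F)), D ≤ hermDual p D →
      ∀ M : Finset (Fin n → F),
      LinearIndependent F (Subtype.val : ↥(M : Set (Fin n → F)) → (Fin n → F)) →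
      Submodule.span F (M : Set (Fin n → F)) = D ⊓ hermDual p D →
      (∃ B : Finset (Fin n → F),
        (↑B : Set (Fin n → F)) ⊆ D ∧
        (∀ b ∈ B, ∀ b' ∈ B, b ≠ b' → ∑ i, b i * (b' i) ^ p = 0) ∧
        (∀ b ∈ B, ∑ i, (b i) ^ (p + 1) = 1) ∧
        LinearIndependent F (Subtype.val : ↥((M ∪ B : Finset (Fin n → F)) : Set (Fin n → F)) → (Fin n → F)) ∧
        Submodule.span F ((M ∪ B : Finset (Fin n → F)) : Set (Fin n → F)) = D) := by
    intro D hle M hli hspan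
    refine ⟨∅, by simp, by simp, by simp, ?_, ?_⟩
    · rw [Finset.union_empty]; exact hli
    · rw [Finset.union_empty, hspan, inf_eq_left.mpr hle]
  intro k
  induction k with
  | zero =>
    intro D hD M hli hspan
    have hbot : D = ⊥ := Submodule.finrank_eq_zero.mp (Nat.le_zero.mp hD)
    exact base D (hbot ▸ bot_le) M hli hspan
  | succ k ih =>
    intro D hD M hli hspan
    by_cases hle : D ≤ hermDual p D
    · exact base D hle M hli hspan
    -- get a vector of norm 1 in D
    obtain ⟨y, hyD, hy⟩ := exists_nonisotropic hp hF D hle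
    set a := Bf p y y with ha
    have hafix : a ^ p = a := (Bf_conj hF y y).symm
    have hainv_ne : a⁻¹ ≠ 0 := inv_ne_zero hy
    have hainvfix : (a⁻¹) ^ p = a⁻¹ := by rw [inv_pow, hafix]
    obtain ⟨c, hc⟩ := exists_pow_eq hp hF hainv_ne hainvfix
    set b := c • y with hb
    have hbD : b ∈ D := D.smul_mem c hyD
    have hbb : Bf p b b = 1 := by
      rw [hb, Bf_smul_left, Bf_smul_right, ← mul_assoc, ← pow_succ', hc, ← ha,
        inv_mul_cancel₀ hy]
    -- the orthogonal complement of b inside D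
    set D' := D ⊓ LinearMap.ker (BfL p b) with hD'def
    have hD'le : D' ≤ D := inf_le_left
    have hD'ker : ∀ v ∈ D', Bf p v b = 0 := by
      intro v hv
      have h2 := (Submodule.mem_inf.mp hv).2
      rwa [LinearMap.mem_ker] at h2
    have hbnot : b ∉ D' := by
      intro hmem
      have := hD'ker b hmem
      rw [hbb] at this
      exact one_ne_zero this
    have hlt : D' < D := lt_of_le_of_ne hD'le (by intro hEq; exact hbnot (hEq.symm ▸ hbD))
    have hrank : Module.finrank F D' ≤ k := by
      have := Submodule.finrank_lt_finrank_of_lt hlt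
      omega
    -- decomposition of any element of D
    have hdec : ∀ d ∈ D, d - Bf p d b • b ∈ D' := by
      intro d hd
      refine Submodule.mem_inf.mpr ⟨D.sub_mem hd (D.smul_mem _ hbD), ?_⟩
      rw [LinearMap.mem_ker]
      show Bf p (d - Bf p d b • b) b = 0
      rw [Bf_sub_left, Bf_smul_left, hbb, mul_one, sub_self]
    -- the radical is unchanged
    have hrad : D' ⊓ hermDual p D' = D ⊓ hermDual p D := by
      apply le_antisymm
      · intro v hv
        obtain ⟨hvD', hvdual⟩ := Submodule.mem_inf.mp hv
        have hvD : v ∈ D := hD'le hvD'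
        have hvb : Bf p v b = 0 := hD'ker v hvD'
        refine Submodule.mem_inf.mpr ⟨hvD, mem_hermDual.mpr ?_⟩
        intro d hd
        have h1 : Bf p v (d - Bf p d b • b) = 0 := mem_hermDual.mp hvdual _ (hdec d hd)
        rw [Bf_sub_right, Bf_smul_right, hvb, mul_zero, sub_zero] at h1
        exact h1
      · intro v hv
        obtain ⟨hvD, hvdual⟩ := Submodule.mem_inf.mp hv
        have hvb : Bf p v b = 0 := mem_hermDual.mp hvdual b hbD
        refine Submodule.mem_inf.mpr
          ⟨Submodule.mem_inf.mpr ⟨hvD, LinearMap.mem_ker.mpr hvb⟩, mem_hermDual.mpr ?_⟩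
        intro d hd
        exact mem_hermDual.mp hvdual d (hD'le hd)
    have hspan' : Submodule.span F (M : Set (Fin n → F)) = D' ⊓ hermDual p D' :=
      hspan.trans hrad.symm
    obtain ⟨B', hB'sub, hB'orth, hB'norm, hB'li, hB'span⟩ := ih D' hrank M hli hspan'
    have hB'ker : ∀ w ∈ B', Bf p w b = 0 := fun w hw => hD'ker w (hB'sub hw)
    refine ⟨insert b B', ?_, ?_, ?_, ?_, ?_⟩
    · intro v hv
      rcases Finset.mem_insert.mp (by exact_mod_cast hv) with rfl | hv'
      · exact hbD
      · exact hD'le (hB'sub hv')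
    · intro u hu w hw hne
      rcases Finset.mem_insert.mp hu with rfl | hu' <;>
        rcases Finset.mem_insert.mp hw with h | hw'
      · exact absurd h.symm hne
      · show Bf p b w = 0
        rw [Bf_conj hF w b, hB'ker w hw', zero_pow hp.ne_zero]
      · subst h
        exact hB'ker u hu'
      · exact hB'orth u hu' w hw' hne
    · intro u hu
      rcases Finset.mem_insert.mp hu with rfl | hu'
      · calc ∑ i, b i ^ (p + 1) = Bf p b b :=
              Finset.sum_congr rfl fun i _ => pow_succ' (b i) p
          _ = 1 := hbb
      · exact hB'norm u hu'
    · rw [Finset.union_insert, Finset.coe_insert]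
      exact LinearIndepOn.id_insert hB'li (hB'span ▸ hbnot)
    · rw [Finset.union_insert, Finset.coe_insert, Submodule.span_insert, hB'span]
      apply le_antisymm
      · exact sup_le ((Submodule.span_singleton_le_iff_mem b D).mpr hbD) hD'le
      · intro d hd
        have hdd : Bf p d b • b + (d - Bf p d b • b) = d := by abel
        refine Submodule.mem_sup.mpr ⟨Bf p d b • b, ?_, d - Bf p d b • b, hdec d hd, hdd⟩
        exact Submodule.smul_mem _ _ (Submodule.mem_span_singleton_self b)
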